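/- Let H be a simple (0,1)-matrix, let ℓ ≥ 0 and t ≥ 2 be integers, and assume that there is a constant c > 0 such that forb(m, H) ≤ c·m^ℓ for all m ≥ 1. Then there is a constant c' > 0 such that forb(m, t·H) ≤ c'·m^{ℓ+1} for all m ≥ 1. -/

import Mathlib

/-- `F` is a configuration in `A`: some row and column permutation of `F`
is a submatrix of `A`. -/
def IsConfig {k n m p : ℕ} (F : Matrix (Fin k) (Fin n) Bool)
    (A : Matrix (Fin m) (Fin p) Bool) : Prop :=
  ∃ (r : Fin k → Fin m) (c : Fin n → Fin p),
    Function.Injective r ∧ Function.Injective c ∧ ∀ i j, A (r i) (c j) = F i j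

/-- A (0,1)-matrix is simple if no two of its columns are equal. -/
def Simple {m p : ℕ} (A : Matrix (Fin m) (Fin p) Bool) : Prop :=
  Function.Injective fun j i => A i j

/-- A (0,1)-matrix is `t`-simple if every column occurs with multiplicity at most `t`. -/
def TSimple {m p : ℕ} (t : ℕ) (A : Matrix (Fin m) (Fin p) Bool) : Prop :=
  ∀ j : Fin p, (Finset.univ.filter fun j' : Fin p => ∀ i, A i j' = A i j).card ≤ t

/-- `forb m F`: the maximum number of columns of an `m`-rowed simple matrix
avoiding `F` as a configuration. -/
noncomputable def forb (m : ℕ) {k n : ℕ} (F : Matrix (Fin k) (Fin n) Bool) : ℕ :=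
  sSup { p : ℕ | ∃ A : Matrix (Fin m) (Fin p) Bool, Simple A ∧ ¬ IsConfig F A }

/-- `t·M`: the concatenation of `t` copies of `M`. -/
def tCopies {k n : ℕ} (t : ℕ) (M : Matrix (Fin k) (Fin n) Bool) :
    Matrix (Fin k) (Fin (t * n)) Bool :=
  fun i j => M i ⟨j.val % n, Nat.mod_lt _ (by
    rcases Nat.eq_zero_or_pos n with h | h
    · exact absurd j.isLt (by simp [h])
    · exact h)⟩

/-- `F_{a,b,c,d}`: the `(a+b+c+d) × 2` matrix with `a` rows `[1 1]`, `b` rows `[1 0]`,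
`c` rows `[0 1]` and `d` rows `[0 0]`. -/
def Fabcd (a b c d : ℕ) : Matrix (Fin (a+b+c+d)) (Fin 2) Bool :=
  fun i j =>
    if i.val < a then true
    else if i.val < a + b then decide (j = 0)
    else if i.val < a + b + c then decide (j = 1)
    else false

/-- **Lemma 4.1.** If `H` is a simple matrix with `forb(m,H) = O(m^ℓ)`,
then `forb(m, t·H) = O(m^{ℓ+1})`. -/
private lemma simple_card_le' {m p : ℕ} {A : Matrix (Fin m) (Fin p) Bool} (h : Simple A) :
    p ≤ 2 ^ m := by
  have h2 := Fintype.card_le_of_injective _ h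
  simpa [Fintype.card_fun] using h2

private lemma le_forb' {m p k n : ℕ} (F : Matrix (Fin k) (Fin n) Bool)
    (A : Matrix (Fin m) (Fin p) Bool) (hA : Simple A) (hAv : ¬ IsConfig F A) :
    p ≤ forb m F :=
  le_csSup ⟨2 ^ m, fun q hq => by obtain ⟨B, hB, _⟩ := hq; exact simple_card_le' hB⟩
    ⟨A, hA, hAv⟩

private def phi {m p : ℕ} (A : Matrix (Fin m) (Fin p) Bool) (i : ℕ) (α : Fin p) :
    Fin m → Bool :=
  fun r => if i ≤ r.val then A r α else false

private lemma phi_lt {m p : ℕ} (A : Matrix (Fin m) (Fin p) Bool) {i : ℕ} (α : Fin p)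
    {r : Fin m} (hr : r.val < i) : phi A i α r = false := if_neg (by omega)

private lemma phi_ge {m p : ℕ} (A : Matrix (Fin m) (Fin p) Bool) {i : ℕ} (α : Fin p)
    {r : Fin m} (hr : i ≤ r.val) : phi A i α r = A r α := if_pos hr

private def fib {m p : ℕ} (A : Matrix (Fin m) (Fin p) Bool) (i : ℕ) (β : Fin m → Bool) :
    Finset (Fin p) :=
  Finset.univ.filter (fun α => phi A i α = β)

private def bigSet {m p : ℕ} (A : Matrix (Fin m) (Fin p) Bool) (t i : ℕ) :
    Finset (Fin m → Bool) :=
  (Finset.univ.image (phi A i)).filter (fun β => t ≤ (fib A i β).card)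

private lemma bigSet_card_le_forb {kH nH m p : ℕ} (H : Matrix (Fin kH) (Fin nH) Bool)
    (t : ℕ) (A : Matrix (Fin m) (Fin p) Bool)
    (hAv : ¬ IsConfig (tCopies t H) A) (i : ℕ) :
    (bigSet A t i).card ≤ forb (m - i) H := by
  classical
  set s := bigSet A t i with hs
  have hβfalse : ∀ β ∈ s, ∀ r : Fin m, r.val < i → β r = false := by
    intro β hβ r hr
    rw [hs, bigSet, Finset.mem_filter, Finset.mem_image] at hβ
    obtain ⟨⟨α, _, rfl⟩, _⟩ := hβ
    exact phi_lt A α hr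
  have hβbig : ∀ β ∈ s, t ≤ (fib A i β).card := by
    intro β hβ
    rw [hs, bigSet, Finset.mem_filter] at hβ
    exact hβ.2
  let e : Fin s.card ≃ s := s.equivFin.symm
  let D : Matrix (Fin (m - i)) (Fin s.card) Bool :=
    fun r j => (e j).1 ⟨r.val + i, by have := r.isLt; omega⟩
  refine le_forb' H D ?_ ?_
  · -- Simple D
    intro j j' h
    apply e.injective
    apply Subtype.ext
    funext r
    by_cases hr : r.val < i
    · rw [hβfalse _ (e j).2 r hr, hβfalse _ (e j').2 r hr]
    · have hr' : r.val - i < m - i := by have := r.isLt; omega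
      have h2 := congrFun h (⟨r.val - i, hr'⟩ : Fin (m - i))
      simp only [D] at h2
      have hfe : (⟨r.val - i + i, by omega⟩ : Fin m) = r := Fin.ext (by simp; omega)
      rwa [hfe] at h2
  · rintro ⟨r', c', hr', hc', hval⟩
    apply hAv
    have hnH : ∀ (j : Fin (t * nH)), j.val % nH < nH := fun j =>
      Nat.mod_lt _ (by
        rcases Nat.eq_zero_or_pos nH with h | h
        · exact absurd j.isLt (by simp [h])
        · exact h)
    have hpick : ∀ b : Fin nH, ∃ g : Fin t → Fin p, Function.Injective g ∧
        ∀ s', phi A i (g s') = (e (c' b)).1 := by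
      intro b
      have hb := hβbig _ (e (c' b)).2
      refine ⟨fun s' => ((fib A i ((e (c' b)).1)).equivFin.symm (Fin.castLE hb s')).1,
        ?_, ?_⟩
      · intro x y hxy
        exact Fin.castLE_injective hb ((fib A i ((e (c' b)).1)).equivFin.symm.injective
          (Subtype.ext hxy))
      · intro s'
        have hm := ((fib A i ((e (c' b)).1)).equivFin.symm (Fin.castLE hb s')).2
        simp only [fib, Finset.mem_filter] at hm
        exact hm.2
    choose g hginj hgval using hpick
    let rr : Fin kH → Fin m := fun a => ⟨(r' a).val + i, by have := (r' a).isLt; omega⟩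
    let cmod : Fin (t * nH) → Fin nH := fun j => ⟨j.val % nH, hnH j⟩
    let cdiv : Fin (t * nH) → Fin t := fun j =>
      ⟨j.val / nH, (Nat.div_lt_iff_lt_mul (by have := hnH j; omega)).2 j.isLt⟩
    let cc : Fin (t * nH) → Fin p := fun j => g (cmod j) (cdiv j)
    refine ⟨rr, cc, ?_, ?_, ?_⟩
    · intro a a' hh
      apply hr'
      apply Fin.ext
      have := congrArg Fin.val hh
      simpa [rr] using this
    · intro j j' hh
      have hh' : g (cmod j) (cdiv j) = g (cmod j') (cdiv j') := hh
      have hb : cmod j = cmod j' := by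
        apply hc'
        apply e.injective
        apply Subtype.ext
        rw [← hgval (cmod j) (cdiv j), ← hgval (cmod j') (cdiv j'), hh']
      rw [← hb] at hh'
      have hdiv : cdiv j = cdiv j' := hginj _ hh'
      have hmod : j.val % nH = j'.val % nH := congrArg Fin.val hb
      have hdiv' : j.val / nH = j'.val / nH := congrArg Fin.val hdiv
      apply Fin.ext
      have e1 := Nat.div_add_mod j.val nH
      have e2 := Nat.div_add_mod j'.val nH
      rw [hmod, hdiv'] at e1
      omega
    · intro a j
      have h1 : A (rr a) (cc j) = phi A i (cc j) (rr a) := by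
        rw [phi_ge]
        simp [rr]
      rw [h1, hgval]
      have h2 := hval a (cmod j)
      simp only [D] at h2
      have h3 : (e (c' (cmod j))).1 (rr a) = H a (cmod j) := h2
      rw [h3]
      rfl

private lemma bigSet_top_card {m p t : ℕ} (A : Matrix (Fin m) (Fin p) Bool) :
    (bigSet A t m).card ≤ 1 := by
  apply Finset.card_le_one.2
  intro a ha b hb
  rw [bigSet, Finset.mem_filter, Finset.mem_image] at ha hb
  obtain ⟨⟨α, _, rfl⟩, _⟩ := ha
  obtain ⟨⟨α', _, rfl⟩, _⟩ := hb
  funext r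
  rw [phi_lt A α' r.isLt, phi_lt A α r.isLt]

private lemma key_count {m p t : ℕ} (ht : 2 ≤ t) (hm : 1 ≤ m)
    (A : Matrix (Fin m) (Fin p) Bool) (hA : Simple A) :
    p ≤ 2 * (t - 1) * (∑ i ∈ Finset.Icc 1 m, (bigSet A t i).card) + t := by
  classical
  by_cases htp : t ≤ p
  swap
  · exact le_trans (by omega) (Nat.le_add_left t _)
  have hattop : ∀ α : Fin p, t ≤ (fib A m (phi A m α)).card := by
    intro α
    have hfull : fib A m (phi A m α) = Finset.univ := by
      ext α'
      simp only [fib, Finset.mem_filter, Finset.mem_univ, true_and, iff_true]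
      funext r
      rw [phi_lt A α' r.isLt, phi_lt A α r.isLt]
    rw [hfull]
    simpa using htp
  have hkey : ∀ α : Fin p, ∃ i, t ≤ (fib A i (phi A i α)).card :=
    fun α => ⟨m, hattop α⟩
  let lvl : Fin p → ℕ := fun α => Nat.find (hkey α)
  have hspec : ∀ α, t ≤ (fib A (lvl α) (phi A (lvl α) α)).card :=
    fun α => Nat.find_spec (hkey α)
  have hmin : ∀ α j, j < lvl α → ¬ t ≤ (fib A j (phi A j α)).card :=
    fun α j hj => Nat.find_min (hkey α) hj
  have hlvl_le : ∀ α, lvl α ≤ m := fun α => Nat.find_le (hattop α)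
  have hlvl_pos : ∀ α, 1 ≤ lvl α := by
    intro α
    rcases Nat.eq_zero_or_pos (lvl α) with h0 | h
    swap
    · exact h
    exfalso
    have hsp := hspec α
    rw [h0] at hsp
    have hfib0 : fib A 0 (phi A 0 α) = {α} := by
      ext α'
      simp only [fib, Finset.mem_filter, Finset.mem_univ, true_and, Finset.mem_singleton]
      constructor
      · intro hphi
        apply hA
        funext r
        have := congrFun hphi r
        rwa [phi_ge A α' (Nat.zero_le _), phi_ge A α (Nat.zero_le _)] at this
      · rintro rfl
        rfl
    rw [hfib0] at hsp
    simp at hsp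
    omega
  have h1 : p = ∑ i ∈ Finset.Icc 1 m, (Finset.univ.filter fun α => lvl α = i).card := by
    have := Finset.card_eq_sum_card_fiberwise
      (f := lvl) (s := Finset.univ) (t := Finset.Icc 1 m)
      (fun α _ => Finset.mem_Icc.2 ⟨hlvl_pos α, hlvl_le α⟩)
    simpa using this
  have h2 : ∀ i ∈ Finset.Icc 1 m,
      (Finset.univ.filter fun α => lvl α = i).card ≤ 2 * (t - 1) * (bigSet A t i).card := by
    intro i hi
    obtain ⟨hi1, him⟩ := Finset.mem_Icc.1 hi
    have h3 : (Finset.univ.filter fun α => lvl α = i).card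
        = ∑ β ∈ bigSet A t i,
          ((Finset.univ.filter fun α => lvl α = i).filter fun α => phi A i α = β).card := by
      apply Finset.card_eq_sum_card_fiberwise
      intro α hα
      rw [Finset.mem_coe, Finset.mem_filter] at hα
      rw [Finset.mem_coe, bigSet, Finset.mem_filter]
      refine ⟨Finset.mem_image_of_mem _ (Finset.mem_univ α), ?_⟩
      have := hspec α
      rwa [hα.2] at this
    rw [h3]
    calc ∑ β ∈ bigSet A t i,
          ((Finset.univ.filter fun α => lvl α = i).filter fun α => phi A i α = β).card
        ≤ ∑ _β ∈ bigSet A t i, 2 * (t - 1) := by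
          apply Finset.sum_le_sum
          intro β hβ
          set S' := ((Finset.univ.filter fun α => lvl α = i).filter fun α => phi A i α = β)
            with hS'
          have hrow : i - 1 < m := by omega
          set rI : Fin m := ⟨i - 1, hrow⟩ with hrI
          have hsub : ∀ v : Bool, ∀ α₀ ∈ S', A rI α₀ = v →
              (S'.filter fun α' => A rI α' = v) ⊆ fib A (i-1) (phi A (i-1) α₀) := by
            intro v α₀ hα₀ hv α' hα'
            rw [Finset.mem_filter] at hα'
            obtain ⟨hα'S, hα'v⟩ := hα'
            rw [hS', Finset.mem_filter, Finset.mem_filter] at hα'S hα₀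
            rw [fib, Finset.mem_filter]
            refine ⟨Finset.mem_univ _, ?_⟩
            funext r
            by_cases hr : i ≤ r.val
            · rw [phi_ge A α' (by omega), phi_ge A α₀ (by omega)]
              have e1 := congrFun hα'S.2 r
              have e2 := congrFun hα₀.2 r
              rw [phi_ge A α' hr] at e1
              rw [phi_ge A α₀ hr] at e2
              rw [e1, e2]
            · by_cases hr2 : i - 1 ≤ r.val
              · have hrr : r = rI := Fin.ext (by simp [hrI]; omega)
                subst hrr
                rw [phi_ge A α' (by simp [hrI]), phi_ge A α₀ (by simp [hrI])]
                rw [hα'v, hv]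
              · rw [phi_lt A α' (by omega), phi_lt A α₀ (by omega)]
          have hsmall : ∀ α₀ ∈ S', (fib A (i-1) (phi A (i-1) α₀)).card ≤ t - 1 := by
            intro α₀ hα₀
            rw [hS', Finset.mem_filter] at hα₀
            have hlt : i - 1 < lvl α₀ := by
              rw [(Finset.mem_filter.1 hα₀.1).2]
              omega
            have := hmin α₀ (i-1) hlt
            omega
          have hv : ∀ v : Bool, (S'.filter fun α' => A rI α' = v).card ≤ t - 1 := by
            intro v
            rcases (S'.filter fun α' => A rI α' = v).eq_empty_or_nonempty with he | hne
            · simp [he]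
            · obtain ⟨α₀, hα₀⟩ := hne
              have hα₀' := Finset.mem_filter.1 hα₀
              calc (S'.filter fun α' => A rI α' = v).card
                  ≤ (fib A (i-1) (phi A (i-1) α₀)).card :=
                    Finset.card_le_card (hsub v α₀ hα₀'.1 hα₀'.2)
                _ ≤ t - 1 := hsmall α₀ hα₀'.1
          have hsplit := Finset.card_filter_add_card_filter_not
            (s := S') (p := fun α' => A rI α' = true)
          have hneg : (S'.filter fun α' => ¬ A rI α' = true)
              = (S'.filter fun α' => A rI α' = false) := by
            apply Finset.filter_congr
            intro x _
            simp
          rw [hneg] at hsplit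
          have hvt := hv true
          have hvf := hv false
          omega
      _ = (bigSet A t i).card * (2 * (t - 1)) := by
          rw [Finset.sum_const, smul_eq_mul]
      _ = 2 * (t - 1) * (bigSet A t i).card := mul_comm _ _
  calc p = ∑ i ∈ Finset.Icc 1 m, (Finset.univ.filter fun α => lvl α = i).card := h1
    _ ≤ ∑ i ∈ Finset.Icc 1 m, 2 * (t - 1) * (bigSet A t i).card :=
        Finset.sum_le_sum h2
    _ = 2 * (t - 1) * (∑ i ∈ Finset.Icc 1 m, (bigSet A t i).card) := by
        rw [Finset.mul_sum]
    _ ≤ _ := Nat.le_add_right _ _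


theorem stmt_8 {kH nH : ℕ} (H : Matrix (Fin kH) (Fin nH) Bool) (hH : Simple H)
    (ℓ t : ℕ) (ht : 2 ≤ t) (c : ℝ) (hc : 0 < c)
    (hbound : ∀ m : ℕ, 1 ≤ m → (forb m H : ℝ) ≤ c * (m : ℝ) ^ ℓ) :
    ∃ c' : ℝ, 0 < c' ∧ ∀ m : ℕ, 1 ≤ m →
      (forb m (tCopies t H) : ℝ) ≤ c' * (m : ℝ) ^ (ℓ + 1) := by
  have ht' : (2:ℝ) ≤ (t:ℝ) := by exact_mod_cast ht
  refine ⟨2 * t * (c + 1) + t, by nlinarith, ?_⟩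
  intro m hm
  have hm1 : (1:ℝ) ≤ (m:ℝ) := by exact_mod_cast hm
  have hM : (1:ℝ) ≤ (m:ℝ) ^ (ℓ + 1) := one_le_pow₀ hm1
  rcases Set.eq_empty_or_nonempty
    {p : ℕ | ∃ A : Matrix (Fin m) (Fin p) Bool, Simple A ∧ ¬ IsConfig (tCopies t H) A}
    with he | hne
  · have h0 : forb m (tCopies t H) = 0 := by
      rw [forb, he, csSup_empty]
      rfl
    rw [h0]
    push_cast
    exact mul_nonneg (by nlinarith) (by positivity)
  · have hbdd : BddAbove
        {p : ℕ | ∃ A : Matrix (Fin m) (Fin p) Bool, Simple A ∧ ¬ IsConfig (tCopies t H) A} :=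
      ⟨2 ^ m, fun q hq => by obtain ⟨B, hB, _⟩ := hq; exact simple_card_le' hB⟩
    have hmem := Nat.sSup_mem hne hbdd
    obtain ⟨A, hA, hAv⟩ := hmem
    have hcount := key_count ht hm A hA
    set Snat := ∑ i ∈ Finset.Icc 1 (m-1), forb (m - i) H with hSnat
    have hsum : ∑ i ∈ Finset.Icc 1 m, (bigSet A t i).card ≤ Snat + 1 := by
      have h0 : ∑ i ∈ Finset.Icc 1 m, (bigSet A t i).card
          = ∑ i ∈ Finset.Icc 1 (m-1), (bigSet A t i).card + (bigSet A t m).card := by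
        have h := Finset.sum_Icc_succ_top (a := 1) (b := m - 1) (by omega)
          (fun i => (bigSet A t i).card)
        rw [show m - 1 + 1 = m from by omega] at h
        exact h
      rw [h0, hSnat]
      exact Nat.add_le_add
        (Finset.sum_le_sum fun i _ => bigSet_card_le_forb H t A hAv i)
        (bigSet_top_card A)
    have hq : sSup {p : ℕ | ∃ A : Matrix (Fin m) (Fin p) Bool,
          Simple A ∧ ¬ IsConfig (tCopies t H) A} ≤ 2 * (t - 1) * (Snat + 1) + t :=
      le_trans hcount (by
        have := Nat.mul_le_mul_left (2 * (t - 1)) hsum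
        omega)
    have hqR : (forb m (tCopies t H) : ℝ) ≤ 2 * ((t:ℝ) - 1) * ((Snat:ℝ) + 1) + t := by
      have : (forb m (tCopies t H) : ℝ) ≤ ((2 * (t - 1) * (Snat + 1) + t : ℕ) : ℝ) := by
        exact_mod_cast hq
      refine le_trans this (le_of_eq ?_)
      push_cast [Nat.cast_sub (show 1 ≤ t by omega)]
      ring
    have hsum2 : (Snat : ℝ) ≤ c * (m:ℝ) ^ (ℓ + 1) := by
      have hterm : ∀ i ∈ Finset.Icc 1 (m-1), (forb (m - i) H : ℝ) ≤ c * (m:ℝ) ^ ℓ := by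
        intro i hi
        obtain ⟨h1i, hile⟩ := Finset.mem_Icc.1 hi
        have h1mi : 1 ≤ m - i := by omega
        refine le_trans (hbound _ h1mi) ?_
        apply mul_le_mul_of_nonneg_left _ hc.le
        apply pow_le_pow_left₀ (by positivity)
        exact_mod_cast Nat.sub_le m i
      calc (Snat : ℝ) = ∑ i ∈ Finset.Icc 1 (m-1), ((forb (m - i) H : ℕ) : ℝ) := by
            rw [hSnat]; push_cast; ring
        _ ≤ ∑ _i ∈ Finset.Icc 1 (m-1), c * (m:ℝ) ^ ℓ := Finset.sum_le_sum hterm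
        _ = ((m - 1 : ℕ) : ℝ) * (c * (m:ℝ) ^ ℓ) := by
            rw [Finset.sum_const, Nat.card_Icc, nsmul_eq_mul]
            norm_num
        _ ≤ (m : ℝ) * (c * (m:ℝ) ^ ℓ) := by
            apply mul_le_mul_of_nonneg_right _ (by positivity)
            exact_mod_cast Nat.sub_le m 1
        _ = c * (m:ℝ) ^ (ℓ + 1) := by ring
    have htR : (0:ℝ) ≤ (t:ℝ) := by positivity
    nlinarith [hqR, hsum2, hM, mul_le_mul_of_nonneg_left hsum2 (by nlinarith : (0:ℝ) ≤ 2 * (t:ℝ)),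
      mul_le_mul_of_nonneg_left hM (by nlinarith : (0:ℝ) ≤ 2 * (t:ℝ))]
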